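/- Linear feature coverage bound: Let Z be a finite nonempty set, φ : Z → ℝ^d a feature map, and let d and ν be probability distributions on Z such that the feature covariance matrix Σ_ν := Σ_z ν(z)·φ(z)·φ(z)ᵀ is positive definite (hence invertible). Then for every nonzero u ∈ ℝ^d: ( Σ_z d(z)·⟨u, φ(z)⟩² ) / ( Σ_z ν(z)·⟨u, φ(z)⟩² ) ≤ Σ_z d(z)·( φ(z)ᵀ Σ_ν⁻¹ φ(z) ), where the denominator Σ_z ν(z)·⟨u, φ(z)⟩² = uᵀ Σ_ν u is strictly positive. -/

import Mathlib

open Finset Matrix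

lemma psd_cauchy_schwarz {n : ℕ} (M : Matrix (Fin n) (Fin n) ℝ) (hM : M.PosSemidef)
    (x y : Fin n → ℝ) :
    (x ⬝ᵥ M *ᵥ y) ^ 2 ≤ (x ⬝ᵥ M *ᵥ x) * (y ⬝ᵥ M *ᵥ y) := by
  have hsymm : ∀ a b : Fin n → ℝ, a ⬝ᵥ M *ᵥ b = b ⬝ᵥ M *ᵥ a := by
    intro a b
    have hMT : Mᵀ = M := by
      have := hM.1
      simpa [Matrix.IsHermitian, Matrix.conjTranspose_eq_transpose_of_trivial] using this
    calc a ⬝ᵥ M *ᵥ b = (Mᵀ *ᵥ a) ⬝ᵥ b := by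
          rw [Matrix.dotProduct_mulVec, Matrix.mulVec_transpose]
      _ = b ⬝ᵥ M *ᵥ a := by rw [hMT, dotProduct_comm]
  have key : ∀ t : ℝ, 0 ≤ (y ⬝ᵥ M *ᵥ y) * (t * t) + (2 * (x ⬝ᵥ M *ᵥ y)) * t + (x ⬝ᵥ M *ᵥ x) := by
    intro t
    have h0 := hM.dotProduct_mulVec_nonneg (x + t • y)
    have hexp : (x + t • y) ⬝ᵥ M *ᵥ (x + t • y)
        = (y ⬝ᵥ M *ᵥ y) * (t * t) + (2 * (x ⬝ᵥ M *ᵥ y)) * t + (x ⬝ᵥ M *ᵥ x) := by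
      simp only [Matrix.mulVec_add, Matrix.mulVec_smul, add_dotProduct, smul_dotProduct,
        dotProduct_add, dotProduct_smul, smul_eq_mul]
      rw [hsymm y x]; ring
    rw [star_trivial, hexp] at h0
    exact h0
  have hd := discrim_le_zero key
  rw [discrim] at hd
  nlinarith [hd]

/-- **Linear feature coverage bound.** -/
theorem linear_feature_coverage
    {Z : Type*} [Fintype Z] [Nonempty Z]
    (dim : ℕ) (φ : Z → Fin dim → ℝ)
    (d ν : Z → ℝ)
    (hdnn : ∀ z, 0 ≤ d z) (hdsum : ∑ z, d z = 1)
    (hνnn : ∀ z, 0 ≤ ν z) (hνsum : ∑ z, ν z = 1)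
    (hpd : (∑ z, ν z • Matrix.vecMulVec (φ z) (φ z)).PosDef) :
    ∀ u : Fin dim → ℝ, u ≠ 0 →
      (0 < ∑ z, ν z * (u ⬝ᵥ φ z) ^ 2) ∧
      (∑ z, d z * (u ⬝ᵥ φ z) ^ 2) / (∑ z, ν z * (u ⬝ᵥ φ z) ^ 2)
        ≤ ∑ z, d z *
            (φ z ⬝ᵥ (∑ z', ν z' • Matrix.vecMulVec (φ z') (φ z'))⁻¹ *ᵥ φ z) := by
  intro u hu
  set S := ∑ z, ν z • Matrix.vecMulVec (φ z) (φ z) with hS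
  -- quadratic form identity
  have hquad : ∀ v : Fin dim → ℝ, v ⬝ᵥ S *ᵥ v = ∑ z, ν z * (v ⬝ᵥ φ z) ^ 2 := by
    intro v
    rw [hS]
    simp only [Matrix.mulVec, dotProduct, Matrix.sum_apply, Matrix.smul_apply,
      Matrix.vecMulVec_apply, smul_eq_mul]
    simp only [Finset.sum_mul, Finset.mul_sum]
    have hstep : ∀ x : Fin dim,
        (∑ x1 : Fin dim, ∑ i : Z, v x * (ν i * (φ i x * φ i x1) * v x1))
          = ∑ i : Z, ∑ x1 : Fin dim, v x * (ν i * (φ i x * φ i x1) * v x1) :=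
      fun x => Finset.sum_comm
    simp only [hstep]
    rw [Finset.sum_comm]
    refine Finset.sum_congr rfl fun z _ => ?_
    simp only [pow_two, dotProduct]
    rw [Finset.sum_mul_sum, Finset.mul_sum]
    refine Finset.sum_congr rfl fun i _ => ?_
    rw [Finset.mul_sum]
    refine Finset.sum_congr rfl fun j _ => ?_
    ring
  have hpos : 0 < ∑ z, ν z * (u ⬝ᵥ φ z) ^ 2 := by
    rw [← hquad u]; have := hpd.dotProduct_mulVec_pos hu; rwa [star_trivial] at this
  refine ⟨hpos, ?_⟩
  -- Cauchy-Schwarz pointwise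
  have hdetu : IsUnit S.det := isUnit_iff_ne_zero.mpr (ne_of_gt hpd.det_pos)
  have hinvmul : S * S⁻¹ = 1 := Matrix.mul_nonsing_inv _ hdetu
  have hCS : ∀ z, (u ⬝ᵥ φ z) ^ 2 ≤ (u ⬝ᵥ S *ᵥ u) * (φ z ⬝ᵥ S⁻¹ *ᵥ φ z) := by
    intro z
    have h := psd_cauchy_schwarz S hpd.posSemidef u (S⁻¹ *ᵥ φ z)
    have h1 : S *ᵥ (S⁻¹ *ᵥ φ z) = φ z := by
      rw [Matrix.mulVec_mulVec, hinvmul, Matrix.one_mulVec]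
    rw [h1] at h
    have h2 : (S⁻¹ *ᵥ φ z) ⬝ᵥ φ z = φ z ⬝ᵥ S⁻¹ *ᵥ φ z := dotProduct_comm _ _
    rw [h2] at h
    exact h
  have hsum : ∑ z, d z * (u ⬝ᵥ φ z) ^ 2
      ≤ (u ⬝ᵥ S *ᵥ u) * ∑ z, d z * (φ z ⬝ᵥ S⁻¹ *ᵥ φ z) := by
    rw [Finset.mul_sum]
    refine Finset.sum_le_sum fun z _ => ?_
    have := hCS z
    have hd0 := hdnn z
    nlinarith
  rw [hquad u] at hsum
  rw [div_le_iff₀ hpos]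
  calc ∑ z, d z * (u ⬝ᵥ φ z) ^ 2 ≤ _ := hsum
    _ = (∑ z, d z * (φ z ⬝ᵥ S⁻¹ *ᵥ φ z)) * ∑ z, ν z * (u ⬝ᵥ φ z) ^ 2 := by ring
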